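/- Let f be a power series in ℚ⟦t⟧ with f(0) = 0 and with the coefficient of t in f nonzero. Then f(X)·(X − Y) divides X·f(Y) − Y·f(X) in ℚ⟦X,Y⟧, where f(X) and f(Y) denote the images of f under substitution of the first and second variable respectively. -/

import Mathlib

noncomputable section

open Classical in
/-- Substitution of (multivariate) power series with zero constant terms into a
multivariate power series, defined coefficientwise: the coefficient at `d` only
involves monomials of `f` of total degree at most the weight of `d`, because each
substituted series has zero constant term, so truncating `f` suffices. -/
noncomputable def MvPowerSeries.substZ {σ τ R : Type*} [Fintype σ] [CommRing R]
    (a : σ → MvPowerSeries τ R) (f : MvPowerSeries σ R) : MvPowerSeries τ R :=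
  fun d =>
    MvPowerSeries.coeff d
      (MvPolynomial.aeval a
        (MvPowerSeries.trunc R
          (Finsupp.equivFunOnFinite.symm fun _ => (d.sum fun _ k => k) + 1) f))

/-- Substitution for one-variable power series: `substZ a f = f(a)`. -/
noncomputable def PowerSeries.substZ {R : Type*} [CommRing R] (a : PowerSeries R)
    (f : PowerSeries R) : PowerSeries R :=
  MvPowerSeries.substZ (fun _ : Unit => a) f

/-- A one-dimensional commutative formal group law over `R`: a two-variable power
series `F` with zero constant term such that `F(X,0) = X`, `F(X,Y) = F(Y,X)` and
`F(F(X,Y),Z) = F(X,F(Y,Z))`. -/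
structure IsFormalGroupLaw {R : Type*} [CommRing R] (F : MvPowerSeries (Fin 2) R) : Prop where
  constantCoeff_eq_zero : MvPowerSeries.constantCoeff F = 0
  subst_zero : MvPowerSeries.substZ ![MvPowerSeries.X 0, 0] F = MvPowerSeries.X 0
  comm : MvPowerSeries.substZ ![MvPowerSeries.X 1, MvPowerSeries.X 0] F = F
  assoc :
    MvPowerSeries.substZ
      ![MvPowerSeries.substZ ![MvPowerSeries.X 0, MvPowerSeries.X 1] F,
        (MvPowerSeries.X 2 : MvPowerSeries (Fin 3) R)] F =
    MvPowerSeries.substZ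
      ![(MvPowerSeries.X 0 : MvPowerSeries (Fin 3) R),
        MvPowerSeries.substZ ![MvPowerSeries.X 1, MvPowerSeries.X 2] F] F

/-- `ι` is the formal inverse of the formal group law `F`:
it has zero constant term and `F(X, ι(X)) = 0`. -/
def IsFormalInverse {R : Type*} [CommRing R] (F : MvPowerSeries (Fin 2) R)
    (ι : PowerSeries R) : Prop :=
  PowerSeries.constantCoeff ι = 0 ∧
    MvPowerSeries.substZ ![PowerSeries.X, ι] F = 0

/-- The image of a one-variable power series under substituting the variable
`X i` of `ℚ⟦X,Y⟧`. -/
noncomputable def substVar {R : Type*} [CommRing R] (i : Fin 2) (f : PowerSeries R) :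
    MvPowerSeries (Fin 2) R :=
  MvPowerSeries.substZ (fun _ : Unit => (MvPowerSeries.X i : MvPowerSeries (Fin 2) R)) f

open Finsupp MvPowerSeries

lemma coeff_substVar {R : Type*} [CommRing R] (i : Fin 2) (f : PowerSeries R)
    (d : Fin 2 →₀ ℕ) :
    MvPowerSeries.coeff d (substVar i f)
      = if d = Finsupp.single i (d i) then PowerSeries.coeff (d i) f else 0 := by
  classical
  set N : Unit →₀ ℕ := Finsupp.equivFunOnFinite.symm fun _ => (d.sum fun _ k => k) + 1 with hN
  have hNval : N () = (d.sum fun _ k => k) + 1 := rfl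
  have key : MvPowerSeries.coeff d (substVar i f)
      = MvPowerSeries.coeff d
        (MvPolynomial.aeval (fun _ : Unit => (MvPowerSeries.X i : MvPowerSeries (Fin 2) R))
          (MvPowerSeries.trunc R N f)) := by
    simp only [substVar, MvPowerSeries.substZ, MvPowerSeries.coeff_apply]
    rw [hN]
    convert rfl
  rw [key]
  have htr : MvPowerSeries.trunc R N f =
      ∑ m ∈ Finset.Iio N, MvPolynomial.monomial m (MvPowerSeries.coeff m f) := by
    ext e
    rw [MvPowerSeries.coeff_trunc, MvPolynomial.coeff_sum]
    simp only [MvPolynomial.coeff_monomial]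
    rw [Finset.sum_ite_eq' (Finset.Iio N) e]
    simp [Finset.mem_Iio]
  rw [htr, map_sum, map_sum]
  have hterm : ∀ m : Unit →₀ ℕ,
      MvPowerSeries.coeff d
        (MvPolynomial.aeval (fun _ : Unit => (MvPowerSeries.X i : MvPowerSeries (Fin 2) R))
          (MvPolynomial.monomial m (MvPowerSeries.coeff m f)))
      = if d = Finsupp.single i (m ()) then MvPowerSeries.coeff m f else 0 := by
    intro m
    rw [MvPolynomial.aeval_monomial]
    have hm : m = Finsupp.single () (m ()) := Finsupp.unique_single m
    rw [hm]
    rw [Finsupp.prod_single_index (by simp)]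
    rw [MvPowerSeries.X_pow_eq]
    have : (algebraMap R (MvPowerSeries (Fin 2) R)) (MvPowerSeries.coeff (Finsupp.single () (m ())) f) = MvPowerSeries.monomial 0 (MvPowerSeries.coeff (Finsupp.single () (m ())) f) := rfl
    rw [this, MvPowerSeries.monomial_mul_monomial, MvPowerSeries.coeff_monomial]
    simp [← hm]
  simp_rw [hterm]
  by_cases hd : d = Finsupp.single i (d i)
  · rw [if_pos hd]
    rw [Finset.sum_eq_single (Finsupp.single () (d i))]
    · rw [if_pos (by rwa [Finsupp.single_eq_same])]
      rfl
    · intro m hm hne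
      rw [if_neg]
      intro hcon
      apply hne
      have : m () = d i := Finsupp.single_injective i (hcon.symm.trans hd)
      rw [Finsupp.unique_single m, this]
    · intro hni
      exfalso
      apply hni
      rw [Finset.mem_Iio]
      constructor
      · intro u
        have : (Finsupp.single () (d i)) () ≤ N () := by
          rw [hNval, Finsupp.single_eq_same, hd]
          simp [Finsupp.sum_single_index]
        exact le_trans (le_of_eq (by cases u; rfl)) this
      · intro hle
        have := hle ()
        rw [Finsupp.single_eq_same, hNval] at this
        have hds : (d.sum fun _ k => k) = d i := by rw [hd]; simp [Finsupp.sum_single_index]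
        omega
  · rw [if_neg hd]
    apply Finset.sum_eq_zero
    intro m _
    rw [if_neg]
    intro hcon
    apply hd
    rw [hcon]; simp [Finsupp.single_eq_same]

lemma constantCoeff_substVar {R : Type*} [CommRing R] (i : Fin 2) (g : PowerSeries R) :
    MvPowerSeries.constantCoeff (substVar i g) = PowerSeries.constantCoeff g := by
  have := coeff_substVar i g 0
  rw [MvPowerSeries.coeff_zero_eq_constantCoeff] at this
  rw [this]
  simp

lemma substVar_X_mul {R : Type*} [CommRing R] (i : Fin 2) (g : PowerSeries R) :
    substVar i (PowerSeries.X * g) = MvPowerSeries.X i * substVar i g := by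
  classical
  ext d
  rw [coeff_substVar, MvPowerSeries.X, MvPowerSeries.coeff_monomial_mul, coeff_substVar]
  by_cases hd : d = Finsupp.single i (d i)
  · rw [if_pos hd]
    rcases Nat.eq_zero_or_pos (d i) with h0 | hpos
    · have hd0 : d = 0 := by rw [hd, h0, Finsupp.single_zero]
      rw [h0]
      have : ¬ Finsupp.single i 1 ≤ d := by
        rw [hd0]
        intro hle
        simpa using hle i
      rw [if_neg this]
      have : PowerSeries.coeff 0 (PowerSeries.X * g) = 0 := by
        simpa using PowerSeries.coeff_zero_eq_constantCoeff (R := R) ▸ (by simp :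
          PowerSeries.constantCoeff (PowerSeries.X * g) = 0)
      simpa using this
    · obtain ⟨n, hn⟩ : ∃ n, d i = n + 1 := ⟨d i - 1, by omega⟩
      have hle : Finsupp.single i 1 ≤ d := by
        rw [Finsupp.single_le_iff]; omega
      rw [if_pos hle, hn, PowerSeries.coeff_succ_X_mul]
      have hsub : d - Finsupp.single i 1 = Finsupp.single i n := by
        rw [hd, hn, ← Finsupp.single_tsub]
        norm_num
      rw [hsub]
      rw [if_pos (by simp)]
      simp
  · rw [if_neg hd]
    by_cases hle : Finsupp.single i 1 ≤ d
    · rw [if_pos hle, if_neg, mul_zero]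
      intro hcon
      apply hd
      have hdd : d = (d - Finsupp.single i 1) + Finsupp.single i 1 := by
        rw [tsub_add_cancel_of_le hle]
      rw [hcon] at hdd
      rw [hdd, ← Finsupp.single_add]
      congr 1
      rw [hdd]
      simp
    · rw [if_neg hle]

/-- The explicit quotient witnessing `(X 0 - X 1) ∣ substVar 1 g - substVar 0 g`. -/
lemma X_sub_X_dvd {R : Type*} [CommRing R] (g : PowerSeries R) :
    (MvPowerSeries.X 0 - MvPowerSeries.X 1 : MvPowerSeries (Fin 2) R) ∣
      substVar 1 g - substVar 0 g := by
  classical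
  refine ⟨fun d => - PowerSeries.coeff (d 0 + d 1 + 1) g, ?_⟩
  ext d
  set q : MvPowerSeries (Fin 2) R := fun d => - PowerSeries.coeff (d 0 + d 1 + 1) g with hqdef
  rw [map_sub, coeff_substVar, coeff_substVar, sub_mul, map_sub]
  have hq : ∀ e : Fin 2 →₀ ℕ, MvPowerSeries.coeff e q = - PowerSeries.coeff (e 0 + e 1 + 1) g :=
    fun e => rfl
  have hX : ∀ j : Fin 2, MvPowerSeries.coeff d ((MvPowerSeries.X j : MvPowerSeries (Fin 2) R) * q)
      = if Finsupp.single j 1 ≤ d then MvPowerSeries.coeff (d - Finsupp.single j 1) q else 0 := by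
    intro j
    rw [MvPowerSeries.X, MvPowerSeries.coeff_monomial_mul]
    split_ifs with h
    · rw [one_mul]
    · rfl
  rw [hX 0, hX 1]
  have h01 : (0 : Fin 2) ≠ 1 := by decide
  have hsingle_le : ∀ j : Fin 2, Finsupp.single j 1 ≤ d ↔ 1 ≤ d j := fun j =>
    Finsupp.single_le_iff
  have happ : ∀ (j k : Fin 2), (d - Finsupp.single j 1 : Fin 2 →₀ ℕ) k = d k - (if j = k then 1 else 0) := by
    intro j k
    rw [Finsupp.tsub_apply, Finsupp.single_apply]
  -- characterize d = single j (d j)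
  have hchar : ∀ j k : Fin 2, j ≠ k → (d = Finsupp.single j (d j) ↔ d k = 0) := by
    intro j k hjk
    constructor
    · intro h
      conv_lhs => rw [h]
      rw [Finsupp.single_apply, if_neg hjk]
    · intro h
      ext m
      rw [Finsupp.single_apply]
      by_cases hm : j = m
      · subst hm; simp
      · rw [if_neg hm]
        have : m = k := by omega
        rw [this, h]
  rcases Nat.eq_zero_or_pos (d 0) with h0 | h0 <;>
    rcases Nat.eq_zero_or_pos (d 1) with h1 | h1
  · -- both zero
    rw [if_pos ((hchar 1 0 (by decide)).2 h0), if_pos ((hchar 0 1 h01).2 h1)]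
    rw [if_neg (by rw [hsingle_le]; omega), if_neg (by rw [hsingle_le]; omega)]
    rw [h0, h1, sub_self, sub_self]
  · -- d 0 = 0, d 1 ≥ 1
    rw [if_pos ((hchar 1 0 (by decide)).2 h0), if_neg (by
      rw [hchar 0 1 h01]; omega)]
    rw [if_neg (by rw [hsingle_le]; omega), if_pos (by rw [hsingle_le]; omega)]
    rw [hq]
    have a0 : (d - Finsupp.single 1 1 : Fin 2 →₀ ℕ) 0 = d 0 := by rw [happ]; norm_num
    have a1 : (d - Finsupp.single 1 1 : Fin 2 →₀ ℕ) 1 = d 1 - 1 := by rw [happ]; norm_num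
    rw [a0, a1, h0]
    have : 0 + (d 1 - 1) + 1 = d 1 := by omega
    rw [this]
    ring
  · -- d 0 ≥ 1, d 1 = 0
    rw [if_neg (by rw [hchar 1 0 (by decide)]; omega), if_pos ((hchar 0 1 h01).2 h1)]
    rw [if_pos (by rw [hsingle_le]; omega), if_neg (by rw [hsingle_le]; omega)]
    rw [hq]
    have a0 : (d - Finsupp.single 0 1 : Fin 2 →₀ ℕ) 0 = d 0 - 1 := by rw [happ]; norm_num
    have a1 : (d - Finsupp.single 0 1 : Fin 2 →₀ ℕ) 1 = d 1 := by rw [happ]; norm_num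
    rw [a0, a1, h1]
    have : d 0 - 1 + 0 + 1 = d 0 := by omega
    rw [this]
    ring
  · -- both ≥ 1
    rw [if_neg (by rw [hchar 1 0 (by decide)]; omega), if_neg (by rw [hchar 0 1 h01]; omega)]
    rw [if_pos (by rw [hsingle_le]; omega), if_pos (by rw [hsingle_le]; omega)]
    rw [hq, hq]
    have a00 : (d - Finsupp.single 0 1 : Fin 2 →₀ ℕ) 0 = d 0 - 1 := by rw [happ]; norm_num
    have a01 : (d - Finsupp.single 0 1 : Fin 2 →₀ ℕ) 1 = d 1 := by rw [happ]; norm_num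
    have a10 : (d - Finsupp.single 1 1 : Fin 2 →₀ ℕ) 0 = d 0 := by rw [happ]; norm_num
    have a11 : (d - Finsupp.single 1 1 : Fin 2 →₀ ℕ) 1 = d 1 - 1 := by rw [happ]; norm_num
    rw [a00, a01, a10, a11]
    have e1 : d 0 - 1 + d 1 + 1 = d 0 + d 1 := by omega
    have e2 : d 0 + (d 1 - 1) + 1 = d 0 + d 1 := by omega
    rw [e1, e2, sub_self, sub_self]

/-- if `f ∈ ℚ⟦t⟧` has `f(0) = 0` and nonzero coefficient of `t`,
then `f(X)·(X - Y)` divides `X·f(Y) - Y·f(X)` in `ℚ⟦X,Y⟧`. -/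
theorem fX_mul_sub_dvd
    (f : PowerSeries ℚ) (h0 : PowerSeries.constantCoeff f = 0)
    (h1 : PowerSeries.coeff 1 f ≠ 0) :
    substVar 0 f * (MvPowerSeries.X 0 - MvPowerSeries.X 1) ∣
      MvPowerSeries.X 0 * substVar 1 f - MvPowerSeries.X 1 * substVar 0 f := by
  obtain ⟨g, hg⟩ := PowerSeries.X_dvd_iff.mpr h0
  have hc : PowerSeries.constantCoeff g ≠ 0 := by
    have h2 := PowerSeries.coeff_succ_X_mul 0 g
    rw [← hg] at h2
    rw [← PowerSeries.coeff_zero_eq_constantCoeff_apply, ← h2]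
    exact h1
  have hu : IsUnit (substVar 0 g) := by
    rw [MvPowerSeries.isUnit_iff_constantCoeff, constantCoeff_substVar]
    exact isUnit_iff_ne_zero.mpr hc
  obtain ⟨v, hv⟩ := hu
  obtain ⟨q, hqe⟩ := X_sub_X_dvd g
  rw [hg, substVar_X_mul, substVar_X_mul]
  refine ⟨MvPowerSeries.X 1 * q * (↑v⁻¹ : MvPowerSeries (Fin 2) ℚ), ?_⟩
  have h1' : substVar 0 g * (↑v⁻¹ : MvPowerSeries (Fin 2) ℚ) = 1 := by rw [← hv]; exact v.mul_inv
  linear_combination (MvPowerSeries.X 0 * MvPowerSeries.X 1 : MvPowerSeries (Fin 2) ℚ) * hqe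
    - (MvPowerSeries.X 0 * MvPowerSeries.X 1 *
        (MvPowerSeries.X 0 - MvPowerSeries.X 1) * q) * h1'
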